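/- Let ζ be a primitive 13th root of unity and let 𝔭₁₃ be the unique prime of ℚ(ζ) above 13, with valuation v normalized so that v(13) = 12. If a, b are coprime integers with 13 ∣ a + b, then v(a + ζ^k b) = 1 for all k with 1 ≤ k ≤ 12. -/

import Mathlib

open NumberField

/-- Product of elements each associated to `c` is associated to `c ^ card`. -/
lemma prod_associated_aux {R : Type*} [CommMonoid R] (s : Finset R) (f : R → R) (c : R)
    (h : ∀ μ ∈ s, Associated (f μ) c) :
    Associated (∏ μ ∈ s, f μ) (c ^ s.card) := by
  classical
  induction s using Finset.induction_on with
  | empty => simp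
  | @insert x s hx ih =>
    rw [Finset.prod_insert hx, Finset.card_insert_of_notMem hx, pow_succ,
      mul_comm (c ^ s.card)]
    exact (h x (Finset.mem_insert_self x s)).mul_mul
      (ih fun μ hμ => h μ (Finset.mem_insert_of_mem hμ))

/-- Let `ζ` be a primitive 13th root of unity in the ring of integers of `ℚ(ζ₁₃)` and
let `𝔭₁₃` be the unique prime above `13`, with the valuation normalized so that
`v(13) = 12` (i.e. `𝔭₁₃^12` exactly divides `(13)`). If `a, b` are coprime integers
with `13 ∣ a + b`, then `v(a + ζ^k b) = 1` for all `1 ≤ k ≤ 12`, i.e. `𝔭₁₃`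
divides `(a + ζ^k b)` but `𝔭₁₃²` does not. -/
theorem valuation_of_factors_eq_one
    (ζ : 𝓞 (CyclotomicField 13 ℚ)) (hζ : IsPrimitiveRoot ζ 13)
    (𝔭 : Ideal (𝓞 (CyclotomicField 13 ℚ))) (h𝔭 : 𝔭.IsPrime) (h𝔭ne : 𝔭 ≠ ⊥)
    (h13a : 𝔭 ^ 12 ∣ Ideal.span {(13 : 𝓞 (CyclotomicField 13 ℚ))})
    (h13b : ¬ 𝔭 ^ 13 ∣ Ideal.span {(13 : 𝓞 (CyclotomicField 13 ℚ))})
    (a b : ℤ) (hab : IsCoprime a b) (hsum : (13 : ℤ) ∣ a + b)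
    (k : ℕ) (hk1 : 1 ≤ k) (hk2 : k ≤ 12) :
    𝔭 ∣ Ideal.span {(a : 𝓞 (CyclotomicField 13 ℚ)) + ζ ^ k * b} ∧
      ¬ 𝔭 ^ 2 ∣ Ideal.span {(a : 𝓞 (CyclotomicField 13 ℚ)) + ζ ^ k * b} := by
  haveI : Fact (Nat.Prime 13) := ⟨by norm_num⟩
  haveI : NeZero (13 : ℚ) := ⟨by norm_num⟩
  haveI : IsCyclotomicExtension {13} ℚ (CyclotomicField 13 ℚ) :=
    CyclotomicField.isCyclotomicExtension 13 ℚ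
  haveI : NumberField (CyclotomicField 13 ℚ) := IsCyclotomicExtension.numberField {13} ℚ _
  -- `ζ - 1` is prime
  have hζK : IsPrimitiveRoot
      ((algebraMap (𝓞 (CyclotomicField 13 ℚ)) (CyclotomicField 13 ℚ)) ζ) 13 :=
    hζ.map_of_injective RingOfIntegers.coe_injective
  have hprime : Prime (ζ - 1) := by
    have hζK' : IsPrimitiveRoot
        ((algebraMap (𝓞 (CyclotomicField 13 ℚ)) (CyclotomicField 13 ℚ)) ζ) ((13 : ℕ+) : ℕ) := hζK
    haveI : Fact (Nat.Prime ((13 : ℕ+) : ℕ)) := ⟨by norm_num⟩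
    have h := hζK'.zeta_sub_one_prime' (p := 13)
    have h2 : hζK'.toInteger = ζ := rfl
    rwa [h2] at h
  -- any primitive root gives an associate of `ζ - 1`
  have hA : ∀ μ : 𝓞 (CyclotomicField 13 ℚ), IsPrimitiveRoot μ 13 →
      Associated (μ - 1) (ζ - 1) := by
    intro μ hμ
    obtain ⟨i, _, hi⟩ := hζ.eq_pow_of_pow_eq_one hμ.pow_eq_one
    obtain ⟨j, _, hj⟩ := hμ.eq_pow_of_pow_eq_one hζ.pow_eq_one
    refine associated_of_dvd_dvd ?_ ?_
    · have := sub_dvd_pow_sub_pow μ 1 j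
      simpa [hj] using this
    · have := sub_dvd_pow_sub_pow ζ 1 i
      simpa [hi] using this
  -- `13` is associated to `(ζ - 1) ^ 12`
  have hass : Associated (13 : 𝓞 (CyclotomicField 13 ℚ)) ((ζ - 1) ^ 12) := by
    have h1 : Polynomial.eval 1 (Polynomial.cyclotomic 13 (𝓞 (CyclotomicField 13 ℚ)))
        = (13 : 𝓞 (CyclotomicField 13 ℚ)) := by
      rw [Polynomial.eval_one_cyclotomic_prime]; norm_num
    have h2 : Polynomial.eval 1 (Polynomial.cyclotomic 13 (𝓞 (CyclotomicField 13 ℚ)))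
        = ∏ μ ∈ primitiveRoots 13 (𝓞 (CyclotomicField 13 ℚ)), (1 - μ) := by
      rw [Polynomial.cyclotomic_eq_prod_X_sub_primitiveRoots hζ, Polynomial.eval_prod]
      simp
    have hcard : (primitiveRoots 13 (𝓞 (CyclotomicField 13 ℚ))).card = 12 := by
      rw [hζ.card_primitiveRoots, Nat.totient_prime (by norm_num)]
    have hprod := prod_associated_aux (primitiveRoots 13 (𝓞 (CyclotomicField 13 ℚ)))
      (fun μ => 1 - μ) (ζ - 1) ?_
    · rw [hcard] at hprod
      rw [← h1, h2]
      exact hprod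
    · intro μ hμmem
      have hμ : IsPrimitiveRoot μ 13 := (mem_primitiveRoots (by norm_num)).1 hμmem
      have h3 : Associated (1 - μ) (μ - 1) := ⟨-1, by simp⟩
      exact h3.trans (hA μ hμ)
  -- identify `𝔭` with `span {ζ - 1}`
  have h13mem : (13 : 𝓞 (CyclotomicField 13 ℚ)) ∈ 𝔭 := by
    have h1 : 𝔭 ∣ Ideal.span {(13 : 𝓞 (CyclotomicField 13 ℚ))} :=
      dvd_trans (dvd_pow_self 𝔭 (by norm_num)) h13a
    exact Ideal.dvd_span_singleton.1 h1
  have hlammem : ζ - 1 ∈ 𝔭 := by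
    obtain ⟨u, hu⟩ := hass
    have hpow : (ζ - 1) ^ 12 ∈ 𝔭 := by
      rw [← hu]; exact Ideal.mul_mem_right _ _ h13mem
    exact h𝔭.mem_of_pow_mem _ hpow
  have hle : Ideal.span {ζ - 1} ≤ 𝔭 := by
    rw [Ideal.span_le]; simpa using hlammem
  have hspanprime : (Ideal.span {ζ - 1}).IsPrime :=
    (Ideal.span_singleton_prime hprime.ne_zero).2 hprime
  have hspanmax : (Ideal.span {ζ - 1}).IsMaximal :=
    Ideal.IsPrime.isMaximal hspanprime
      (by simp [Ideal.span_singleton_eq_bot, hprime.ne_zero])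
  have heq : 𝔭 = Ideal.span {ζ - 1} := (hspanmax.eq_of_le h𝔭.ne_top hle).symm
  -- basic divisibilities
  have hlam13 : ζ - 1 ∣ (13 : 𝓞 (CyclotomicField 13 ℚ)) :=
    dvd_trans (dvd_pow_self (ζ - 1) (by norm_num)) hass.symm.dvd
  have hlam213 : (ζ - 1) ^ 2 ∣ (13 : 𝓞 (CyclotomicField 13 ℚ)) :=
    dvd_trans (pow_dvd_pow (ζ - 1) (by norm_num)) hass.symm.dvd
  obtain ⟨c, hc⟩ := hsum
  have hsumR : ((a : 𝓞 (CyclotomicField 13 ℚ)) + b) = 13 * (c : 𝓞 (CyclotomicField 13 ℚ)) := by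
    have := congrArg (fun n : ℤ => (n : 𝓞 (CyclotomicField 13 ℚ))) hc
    push_cast at this
    simpa using this
  have hx : (a : 𝓞 (CyclotomicField 13 ℚ)) + ζ ^ k * b
      = ((a : 𝓞 (CyclotomicField 13 ℚ)) + b) + (ζ ^ k - 1) * b := by ring
  have hzk : ζ - 1 ∣ ζ ^ k - 1 := by
    have := sub_dvd_pow_sub_pow ζ 1 k
    simpa using this
  constructor
  · rw [heq, Ideal.dvd_span_singleton, Ideal.mem_span_singleton, hx]
    exact dvd_add (hsumR ▸ hlam13.mul_right _) (hzk.mul_right _)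
  · rw [heq, Ideal.span_singleton_pow, Ideal.dvd_span_singleton, Ideal.mem_span_singleton, hx]
    intro h2
    have hsumdvd : (ζ - 1) ^ 2 ∣ ((a : 𝓞 (CyclotomicField 13 ℚ)) + b) :=
      hsumR ▸ hlam213.mul_right _
    have h3 : (ζ - 1) ^ 2 ∣ (ζ ^ k - 1) * b := (dvd_add_right hsumdvd).mp h2
    -- `ζ ^ k - 1` is associated to `ζ - 1`
    have hkcop : Nat.Coprime k 13 := by
      rw [Nat.coprime_comm]
      refine (Nat.Prime.coprime_iff_not_dvd (by norm_num)).2 ?_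
      intro hdvd
      have := Nat.le_of_dvd (by omega) hdvd
      omega
    have hζk : IsPrimitiveRoot (ζ ^ k) 13 := hζ.pow_of_coprime k hkcop
    have hassk : Associated ((ζ ^ k - 1) * b) ((ζ - 1) * b) := (hA _ hζk).mul_right _
    have h4 : (ζ - 1) * (ζ - 1) ∣ (ζ - 1) * b := by
      have := dvd_trans h3 hassk.dvd
      rwa [pow_two] at this
    have hlamb : ζ - 1 ∣ (b : 𝓞 (CyclotomicField 13 ℚ)) :=
      (mul_dvd_mul_iff_left hprime.ne_zero).1 h4
    -- but `b` is coprime to 13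
    have h13nb : ¬ (13 : ℤ) ∣ b := by
      intro hb
      have ha : (13 : ℤ) ∣ a := by
        have h5 : a = (a + b) - b := by ring
        rw [h5]; exact dvd_sub ⟨c, hc⟩ hb
      have : IsUnit (13 : ℤ) := hab.isUnit_of_dvd' ha hb
      rw [Int.isUnit_iff] at this
      omega
    have h13nbn : ¬ (13 : ℕ) ∣ b.natAbs := by
      intro h
      exact h13nb (by rwa [← Int.natAbs_natCast 13, Int.natAbs_dvd_natAbs] at h)
    have hcop : IsCoprime (13 : ℤ) b := by
      rw [Int.isCoprime_iff_gcd_eq_one]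
      exact (Nat.Prime.coprime_iff_not_dvd (by norm_num)).2 h13nbn
    obtain ⟨u, v, huv⟩ := hcop
    have hone : ζ - 1 ∣ (1 : 𝓞 (CyclotomicField 13 ℚ)) := by
      have h6 := congrArg (fun n : ℤ => (n : 𝓞 (CyclotomicField 13 ℚ))) huv
      push_cast at h6
      have h7 : ζ - 1 ∣ ((u : 𝓞 (CyclotomicField 13 ℚ)) * 13 + v * b) :=
        dvd_add (Dvd.dvd.mul_left hlam13 _) (Dvd.dvd.mul_left hlamb _)
      rwa [h6] at h7
    exact hprime.not_unit (isUnit_of_dvd_one hone)
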